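/- arXiv:2506.13883 — 4 statements merged into one kernel-verified Lean document; each statement's English description precedes it below -/
import Mathlib

section
/- Let N ≥ 2 be an even integer and t a real number with t ≤ N/e². Then e^t ≤ (1 + e^{-N}/16) · ∑_{k=0}^{N} t^k/k!. -/
open Finset

private noncomputable def PS (n : ℕ) (t : ℝ) : ℝ :=
  ∑ k ∈ Finset.range (n + 1), t ^ k / (Nat.factorial k : ℝ)

private lemma PS_zero_eval (n : ℕ) : PS n 0 = 1 := by
  unfold PS
  rw [Finset.sum_eq_single 0]
  · simp
  · intro k _ hk0; simp [zero_pow hk0]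
  · intro h; exact absurd (Finset.mem_range.mpr (Nat.succ_pos n)) h

private lemma hasDerivAt_PS (n : ℕ) (t : ℝ) : HasDerivAt (PS (n+1)) (PS n t) t := by
  have h : HasDerivAt (fun x : ℝ => ∑ k ∈ Finset.range (n+2), x ^ k / (Nat.factorial k : ℝ))
      (∑ k ∈ Finset.range (n+2), (k : ℝ) * t ^ (k-1) / (Nat.factorial k : ℝ)) t :=
    HasDerivAt.fun_sum fun k _ => (hasDerivAt_pow k t).div_const _
  have he : (∑ k ∈ Finset.range (n+2), (k : ℝ) * t ^ (k-1) / (Nat.factorial k : ℝ)) = PS n t := by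
    rw [Finset.sum_range_succ']
    unfold PS
    simp only [Nat.cast_zero, zero_mul, zero_div, add_zero]
    refine Finset.sum_congr rfl fun i _ => ?_
    have hfa : ((Nat.factorial (i+1) : ℕ) : ℝ) = ((i:ℝ)+1) * (Nat.factorial i : ℝ) := by
      rw [Nat.factorial_succ]; push_cast; ring
    have hpos : (Nat.factorial i : ℝ) ≠ 0 := by
      exact_mod_cast (Nat.factorial_pos i).ne'
    rw [hfa]
    push_cast
    rw [mul_div_mul_left _ _ (by positivity : ((i:ℝ)+1) ≠ 0)]
  rw [← he]
  exact h

private lemma neg_case : ∀ n : ℕ, ∀ t : ℝ, t ≤ 0 →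
    (Even n → Real.exp t ≤ PS n t) ∧ (Odd n → PS n t ≤ Real.exp t) := by
  intro n
  induction n with
  | zero =>
    intro t ht
    constructor
    · intro _
      have : PS 0 t = 1 := by unfold PS; simp
      rw [this]
      exact Real.exp_le_one_iff.mpr ht
    · intro h; exact absurd h (by simp)
  | succ n ih =>
    intro t ht
    have hcPS : Continuous (PS (n+1)) := by
      unfold PS
      exact continuous_finset_sum _ fun k _ => (continuous_pow (M := ℝ) k).div_const _
    constructor
    · intro he
      have hodd : Odd n := Nat.not_even_iff_odd.mp (Nat.even_add_one.mp he)
      have hg : AntitoneOn (fun x => PS (n+1) x - Real.exp x) (Set.Iic (0:ℝ)) := by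
        apply antitoneOn_of_hasDerivWithinAt_nonpos (convex_Iic 0)
          (f' := fun x => PS n x - Real.exp x)
        · exact (hcPS.sub Real.continuous_exp).continuousOn
        · intro x _
          exact ((hasDerivAt_PS n x).sub (Real.hasDerivAt_exp x)).hasDerivWithinAt
        · intro x hx
          rw [interior_Iic] at hx
          have := (ih x (le_of_lt hx)).2 hodd
          linarith
      have h0 := hg (Set.mem_Iic.mpr ht) (Set.mem_Iic.mpr le_rfl) ht
      simp only [PS_zero_eval, Real.exp_zero, sub_self] at h0
      linarith
    · intro ho
      have heven : Even n := Nat.not_odd_iff_even.mp (Nat.odd_add_one.mp ho)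
      have hg : AntitoneOn (fun x => Real.exp x - PS (n+1) x) (Set.Iic (0:ℝ)) := by
        apply antitoneOn_of_hasDerivWithinAt_nonpos (convex_Iic 0)
          (f' := fun x => Real.exp x - PS n x)
        · exact (Real.continuous_exp.sub hcPS).continuousOn
        · intro x _
          exact ((Real.hasDerivAt_exp x).sub (hasDerivAt_PS n x)).hasDerivWithinAt
        · intro x hx
          rw [interior_Iic] at hx
          have := (ih x (le_of_lt hx)).1 heven
          linarith
      have h0 := hg (Set.mem_Iic.mpr ht) (Set.mem_Iic.mpr le_rfl) ht
      simp only [PS_zero_eval, Real.exp_zero, sub_self] at h0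
      linarith

private lemma fact_lb : ∀ n : ℕ, 1 ≤ n →
    Real.exp 1 * ((n : ℝ) / Real.exp 1) ^ n ≤ (Nat.factorial n : ℝ) := by
  intro n
  induction n with
  | zero => intro h; exact absurd h (by norm_num)
  | succ n ih =>
    intro _
    have hE : (0:ℝ) < Real.exp 1 := Real.exp_pos 1
    rcases Nat.eq_zero_or_pos n with h0 | h1
    · subst h0
      norm_num
    · have hn : (0:ℝ) < n := by exact_mod_cast h1
      have h2 : ((n:ℝ)+1)/n ≤ Real.exp (1/(n:ℝ)) := by
        have h3 := Real.add_one_le_exp (1/(n:ℝ))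
        have h4 : ((n:ℝ)+1)/n = 1 + 1/(n:ℝ) := by
          rw [add_div, div_self hn.ne']
        linarith
      have h3 : (((n:ℝ)+1)/n)^n ≤ (Real.exp (1/(n:ℝ)))^n :=
        pow_le_pow_left₀ (by positivity) h2 n
      have h4 : (Real.exp (1/(n:ℝ)))^n = Real.exp 1 := by
        rw [← Real.exp_nat_mul]
        congr 1
        field_simp
      have key : ((n:ℝ)+1)^n ≤ Real.exp 1 * (n:ℝ)^n := by
        rw [h4, div_pow, div_le_iff₀ (by positivity)] at h3
        linarith
      have ihn := ih h1
      set E := Real.exp 1 with hEdef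
      have hEn : (0:ℝ) < E ^ n := by positivity
      have expand : E * (((n:ℝ)+1)/E)^(n+1)
          = (((n:ℝ)+1) * ((n:ℝ)+1)^n) / E ^ n := by
        rw [div_pow, pow_succ]
        field_simp
        ring
      calc E * ((((n:ℕ)+1 : ℕ):ℝ)/E)^(n+1)
          = (((n:ℝ)+1) * ((n:ℝ)+1)^n) / E ^ n := by push_cast; rw [expand]
        _ ≤ (((n:ℝ)+1) * (E * (n:ℝ)^n)) / E ^ n := by
            gcongr
        _ = ((n:ℝ)+1) * (E * ((n:ℝ)/E)^n) := by
            rw [div_pow]; field_simp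
        _ ≤ ((n:ℝ)+1) * (Nat.factorial n : ℝ) := by
            nlinarith [ihn, hn]
        _ = ((Nat.factorial (n+1) : ℕ) : ℝ) := by
            rw [Nat.factorial_succ]; push_cast; ring

private lemma num_ineq (q : ℝ) (hq_inv : q = (Real.exp 2)⁻¹)
    (hE2 : Real.exp (2:ℝ) = Real.exp 1 ^ 2) :
    (1 + q/16) * (Real.exp (-3:ℝ) * (1-q)⁻¹) ≤ 1/16 := by
  obtain ⟨e, he_def⟩ : ∃ e, e = Real.exp 1 := ⟨_, rfl⟩
  have hgt : (2.7182818283:ℝ) < e := by rw [he_def]; exact Real.exp_one_gt_d9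
  have hlt : e < 2.7182818286 := by rw [he_def]; exact Real.exp_one_lt_d9
  have hq2 : q = (e^2)⁻¹ := by rw [hq_inv, hE2, he_def]
  have he3 : Real.exp (-3:ℝ) = (e^3)⁻¹ := by
    rw [Real.exp_neg, he_def]
    congr 1
    rw [show (3:ℝ) = ((3:ℕ):ℝ)*1 by norm_num, Real.exp_nat_mul]
  rw [hq2, he3]
  have hepos : (0:ℝ) < e := by linarith
  have h2 : (0:ℝ) < e^2 - 1 := by nlinarith
  have h1q' : (0:ℝ) < 1 - (e^2)⁻¹ := by
    have h3 : (1:ℝ) < e^2 := by nlinarith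
    have := inv_lt_one_of_one_lt₀ h3
    linarith
  rw [← sub_nonneg]
  have expand : 1/16 - (1 + (e^2)⁻¹/16) * ((e^3)⁻¹ * (1-(e^2)⁻¹)⁻¹)
      = (e^5 - e^3 - 16*e^2 - 1) / (16 * e^3 * (e^2 - 1)) := by
    field_simp
    ring
  rw [expand]
  apply div_nonneg ?_ (by nlinarith [pow_pos hepos 3, h2])
  have p2l : (7.3441:ℝ) < e^2 := by nlinarith
  have p2u : e^2 < 7.3984 := by nlinarith
  have p3u : e^3 < 20.124 := by nlinarith
  have p5l : (145:ℝ) < e^5 := by nlinarith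
  nlinarith [p2u, p3u, p5l]

set_option maxHeartbeats 1000000 in
theorem stmt2 (N : ℕ) (hN2 : 2 ≤ N) (hNeven : Even N) (t : ℝ)
    (ht : t ≤ (N : ℝ) / Real.exp 2) :
    Real.exp t ≤ (1 + Real.exp (-(N : ℝ)) / 16) *
      ∑ k ∈ Finset.range (N + 1), t ^ k / (Nat.factorial k : ℝ) := by
  have hε0 : (0:ℝ) ≤ Real.exp (-(N : ℝ)) / 16 := by positivity
  rcases le_or_gt t 0 with htneg | htpos
  · -- negative case
    have h1 : Real.exp t ≤ PS N t := (neg_case N t htneg).1 hNeven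
    have h2 : (0:ℝ) < PS N t := lt_of_lt_of_le (Real.exp_pos t) h1
    have hgoal : Real.exp t ≤ (1 + Real.exp (-(N : ℝ)) / 16) * PS N t := by
      nlinarith
    exact hgoal
  · -- positive case
    have ht0 : (0:ℝ) ≤ t := le_of_lt htpos
    have hN0 : (0:ℝ) < (N:ℝ) := by exact_mod_cast (by omega : 0 < N)
    have hE : (0:ℝ) < Real.exp 1 := Real.exp_pos 1
    have hE2 : Real.exp (2:ℝ) = Real.exp 1 ^ 2 := by
      rw [show (2:ℝ) = 1 + 1 by norm_num, Real.exp_add]; ring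
    set q : ℝ := Real.exp (-2 : ℝ) with hqdef
    have hq0 : 0 ≤ q := Real.exp_nonneg _
    have hq1 : q < 1 := Real.exp_lt_one_iff.mpr (by norm_num)
    have hq_inv : q = (Real.exp 2)⁻¹ := by rw [hqdef, Real.exp_neg]
    -- the series for exp
    set f : ℕ → ℝ := fun k => t ^ k / (Nat.factorial k : ℝ) with hfdef
    have hsum : Summable f := Real.summable_pow_div_factorial t
    have hexp : ∑' k, f k = Real.exp t := by
      rw [Real.exp_eq_exp_ℝ, NormedSpace.exp_eq_tsum_div]
    have hsplit : (∑ k ∈ Finset.range (N+1), f k) + ∑' k, f (k + (N+1)) = Real.exp t := by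
      rw [Summable.sum_add_tsum_nat_add (N+1) hsum, hexp]
    set R : ℝ := ∑' k, f (k + (N+1)) with hRdef
    have hfact1 : (0:ℝ) < ((N+1).factorial : ℝ) := by exact_mod_cast (N+1).factorial_pos
    have htq : t / ((N:ℝ)+2) ≤ q := by
      rw [div_le_iff₀ (by positivity)]
      have h1 : (N:ℝ)/Real.exp 2 = (N:ℝ) * q := by rw [hq_inv, div_eq_mul_inv]
      nlinarith [ht, hq0, hN0]
    -- termwise bound on the tail
    have hterm : ∀ k : ℕ, f (k + (N+1)) ≤ (t ^ (N+1) / ((N+1).factorial : ℝ)) * q ^ k := by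
      intro k
      have hfa : (((N+1).factorial : ℝ)) * ((N:ℝ)+2) ^ k ≤ ((k + (N+1)).factorial : ℝ) := by
        have h0 := Nat.factorial_mul_pow_le_factorial (m := N+1) (n := k)
        have h' : (N+1) + k = k + (N+1) := by omega
        rw [h'] at h0
        have := (Nat.cast_le (α := ℝ)).mpr h0
        push_cast at this ⊢
        rw [show (N:ℝ)+2 = (N:ℝ)+1+1 by ring]; exact this
      have hden : (0:ℝ) < ((N+1).factorial : ℝ) * ((N:ℝ)+2)^k := by positivity
      have step1 : f (k + (N+1)) ≤ t ^ (k+(N+1)) / (((N+1).factorial : ℝ) * ((N:ℝ)+2)^k) := by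
        simp only [hfdef]
        exact div_le_div_of_nonneg_left (by positivity) hden hfa
      have htt : t ^ (k + (N+1)) = t ^ (N+1) * t ^ k := by rw [pow_add]; ring
      have step2 : t ^ (k+(N+1)) / (((N+1).factorial : ℝ) * ((N:ℝ)+2)^k)
          = (t^(N+1)/((N+1).factorial:ℝ)) * (t/((N:ℝ)+2))^k := by
        rw [htt, div_pow, div_mul_div_comm]
      have step3 : (t/((N:ℝ)+2))^k ≤ q^k := pow_le_pow_left₀ (by positivity) htq k
      calc f (k + (N+1)) ≤ (t^(N+1)/((N+1).factorial:ℝ)) * (t/((N:ℝ)+2))^k := by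
            rw [← step2]; exact step1
        _ ≤ (t^(N+1)/((N+1).factorial:ℝ)) * q^k := by
            apply mul_le_mul_of_nonneg_left step3 (by positivity)
    have hRsum : Summable (fun k => f (k + (N+1))) := (summable_nat_add_iff (N+1)).mpr hsum
    have hgeo : Summable (fun k : ℕ => (t ^ (N+1) / ((N+1).factorial : ℝ)) * q ^ k) :=
      (summable_geometric_of_lt_one hq0 hq1).mul_left _
    have hR1 : R ≤ (t ^ (N+1) / ((N+1).factorial : ℝ)) * (1 - q)⁻¹ := by
      calc R ≤ ∑' k, (t ^ (N+1) / ((N+1).factorial : ℝ)) * q ^ k :=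
            Summable.tsum_le_tsum hterm hRsum hgeo
        _ = _ := by rw [tsum_mul_left, tsum_geometric_of_lt_one hq0 hq1]
    have hR0 : 0 ≤ R := tsum_nonneg fun k => by simp only [hfdef]; positivity
    -- bound t^(N+1)/(N+1)! ≤ exp(-(N+3))
    have hkey1 : ((N:ℝ)/((N:ℝ)+1))^(N+1) ≤ Real.exp (-1 : ℝ) := by
      have h1 : (N:ℝ)/((N:ℝ)+1) ≤ Real.exp (-(1/((N:ℝ)+1))) := by
        have h2 := Real.add_one_le_exp (-(1/((N:ℝ)+1)))
        have heq : -(1/((N:ℝ)+1)) + 1 = (N:ℝ)/((N:ℝ)+1) := by field_simp; ring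
        linarith [heq ▸ h2]
      have h2 := pow_le_pow_left₀ (by positivity) h1 (N+1)
      rwa [← Real.exp_nat_mul,
        show ((N+1:ℕ):ℝ) * -(1/((N:ℝ)+1)) = -1 by push_cast; field_simp] at h2
    have hfactN := fact_lb (N+1) (by omega)
    have hmid : (((N:ℝ)+1)/Real.exp 1)^(N+1) ≤ ((N+1).factorial : ℝ) * Real.exp (-1 : ℝ) := by
      rw [Real.exp_neg, ← div_eq_mul_inv, le_div_iff₀ hE]
      calc (((N:ℝ)+1)/Real.exp 1)^(N+1) * Real.exp 1
          = Real.exp 1 * (((N+1:ℕ):ℝ)/Real.exp 1)^(N+1) := by push_cast; ring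
        _ ≤ _ := hfactN
    have hEe : Real.exp 1 / Real.exp 2 = Real.exp (-1 : ℝ) := by
      rw [← Real.exp_sub]; norm_num
    have hexpN1 : Real.exp (-1 : ℝ) ^ (N+1) = Real.exp (-((N:ℝ)+1)) := by
      rw [← Real.exp_nat_mul]; congr 1; push_cast; ring
    have hsplitpow : ((N:ℝ)/Real.exp 2)^(N+1)
        = ((N:ℝ)/((N:ℝ)+1))^(N+1) * (((N:ℝ)+1)/Real.exp 1)^(N+1) * (Real.exp 1/Real.exp 2)^(N+1) := by
      rw [← mul_pow, ← mul_pow]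
      congr 1
      field_simp
    have hbound : t^(N+1) / ((N+1).factorial : ℝ) ≤ Real.exp (-((N:ℝ)+3)) := by
      rw [div_le_iff₀ hfact1]
      have hexp3 : Real.exp (-1:ℝ) * Real.exp (-1:ℝ) * Real.exp (-((N:ℝ)+1))
          = Real.exp (-((N:ℝ)+3)) := by
        rw [← Real.exp_add, ← Real.exp_add]; congr 1; ring
      calc t^(N+1) ≤ ((N:ℝ)/Real.exp 2)^(N+1) := pow_le_pow_left₀ ht0 ht _
        _ = ((N:ℝ)/((N:ℝ)+1))^(N+1) * (((N:ℝ)+1)/Real.exp 1)^(N+1) * Real.exp (-((N:ℝ)+1)) := by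
            rw [hsplitpow, hEe, hexpN1]
        _ ≤ Real.exp (-1:ℝ) * (((N+1).factorial : ℝ) * Real.exp (-1:ℝ)) * Real.exp (-((N:ℝ)+1)) := by
            apply mul_le_mul_of_nonneg_right ?_ (Real.exp_nonneg _)
            apply mul_le_mul hkey1 hmid (by positivity) (Real.exp_nonneg _)
        _ = Real.exp (-((N:ℝ)+3)) * ((N+1).factorial : ℝ) := by
            rw [← hexp3]; ring
    -- assemble
    have hSsum : (∑ k ∈ Finset.range (N+1), t ^ k / (Nat.factorial k : ℝ)) = Real.exp t - R := by
      have h := hsplit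
      simp only [hfdef] at h
      linarith
    rw [hSsum]
    have het1 : (1:ℝ) ≤ Real.exp t := Real.one_le_exp ht0
    have hN2' : (2:ℝ) ≤ (N:ℝ) := by exact_mod_cast hN2
    have hεq : Real.exp (-(N:ℝ)) ≤ q := by
      rw [hqdef]; exact Real.exp_le_exp.mpr (by linarith)
    have h1q : (0:ℝ) < 1 - q := by linarith
    have hR2 : R ≤ Real.exp (-(N:ℝ)) * (Real.exp (-3:ℝ) * (1-q)⁻¹) := by
      have h3 : Real.exp (-((N:ℝ)+3)) = Real.exp (-(N:ℝ)) * Real.exp (-3:ℝ) := by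
        rw [← Real.exp_add]; congr 1; ring
      calc R ≤ (t^(N+1)/((N+1).factorial:ℝ)) * (1-q)⁻¹ := hR1
        _ ≤ Real.exp (-((N:ℝ)+3)) * (1-q)⁻¹ :=
            mul_le_mul_of_nonneg_right hbound (by positivity)
        _ = _ := by rw [h3]; ring
    have hnum := num_ineq q hq_inv hE2
    -- final
    have hfin : (1 + Real.exp (-(N:ℝ))/16) * R ≤ (Real.exp (-(N:ℝ))/16) * Real.exp t := by
      have hA : (1 + Real.exp (-(N:ℝ))/16) * R
          ≤ (1 + q/16) * (Real.exp (-(N:ℝ)) * (Real.exp (-3:ℝ) * (1-q)⁻¹)) := by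
        apply mul_le_mul (by linarith) hR2 hR0 (by positivity)
      have hB : (1 + q/16) * (Real.exp (-(N:ℝ)) * (Real.exp (-3:ℝ) * (1-q)⁻¹))
          = ((1 + q/16) * (Real.exp (-3:ℝ) * (1-q)⁻¹)) * Real.exp (-(N:ℝ)) := by ring
      have hC : ((1 + q/16) * (Real.exp (-3:ℝ) * (1-q)⁻¹)) * Real.exp (-(N:ℝ))
          ≤ (1/16) * Real.exp (-(N:ℝ)) :=
        mul_le_mul_of_nonneg_right hnum (Real.exp_nonneg _)
      have hD : (1/16) * Real.exp (-(N:ℝ)) ≤ (Real.exp (-(N:ℝ))/16) * Real.exp t := by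
        nlinarith [Real.exp_nonneg (-(N:ℝ)), het1]
      calc (1 + Real.exp (-(N:ℝ))/16) * R ≤ _ := hA
        _ = _ := hB
        _ ≤ (1/16) * Real.exp (-(N:ℝ)) := hC
        _ ≤ _ := hD
    nlinarith [hfin, hR0, Real.exp_pos t]
end

section
/- Let d₀ = b₀² − 4a₀c₀ < 0 and d = b² − 4ac < 0 be discriminants of positive definite integral binary quadratic forms (a₀, a > 0). Let z₀ = (−b₀ + i√|d₀|)/(2a₀) and z = (−b + i√|d|)/(2a) be the corresponding points in the upper half plane, and let u(z,w) = |z−w|²/(4 Im(z) Im(w)). Then 4u(z₀, z) + 2 = (2/√|d·d₀|) · (2(a c₀ + a₀ c) − b b₀). -/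
theorem stmt9 (a₀ b₀ c₀ a b c : ℤ) (ha₀ : 0 < a₀) (ha : 0 < a)
    (hd₀ : b₀ ^ 2 - 4 * a₀ * c₀ < 0) (hd : b ^ 2 - 4 * a * c < 0) :
    let d₀ : ℤ := b₀ ^ 2 - 4 * a₀ * c₀
    let d : ℤ := b ^ 2 - 4 * a * c
    let z₀ : ℂ := (-(b₀ : ℂ) + Complex.I * (Real.sqrt |(d₀ : ℝ)| : ℂ)) / (2 * (a₀ : ℂ))
    let z : ℂ := (-(b : ℂ) + Complex.I * (Real.sqrt |(d : ℝ)| : ℂ)) / (2 * (a : ℂ))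
    4 * (‖z₀ - z‖ ^ 2 / (4 * z₀.im * z.im)) + 2
      = 2 / Real.sqrt |(d : ℝ) * (d₀ : ℝ)| *
          (2 * ((a : ℝ) * (c₀ : ℝ) + (a₀ : ℝ) * (c : ℝ)) - (b : ℝ) * (b₀ : ℝ)) := by
  intro d₀ d z₀ z
  have ha₀' : (0:ℝ) < (a₀:ℝ) := by exact_mod_cast ha₀
  have ha' : (0:ℝ) < (a:ℝ) := by exact_mod_cast ha
  set s₀ : ℝ := Real.sqrt |(d₀ : ℝ)| with hs₀def
  set s : ℝ := Real.sqrt |(d : ℝ)| with hsdef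
  have hd₀' : (0:ℝ) < |(d₀:ℝ)| := by
    have : (d₀:ℝ) < 0 := by exact_mod_cast hd₀
    rw [abs_of_neg this]; linarith
  have hd' : (0:ℝ) < |(d:ℝ)| := by
    have : (d:ℝ) < 0 := by exact_mod_cast hd
    rw [abs_of_neg this]; linarith
  have hs₀pos : 0 < s₀ := Real.sqrt_pos.mpr hd₀'
  have hspos : 0 < s := Real.sqrt_pos.mpr hd'
  have hs₀sq : s₀ ^ 2 = 4*(a₀:ℝ)*(c₀:ℝ) - (b₀:ℝ)^2 := by
    rw [hs₀def, Real.sq_sqrt (le_of_lt hd₀')]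
    have : (d₀:ℝ) < 0 := by exact_mod_cast hd₀
    rw [abs_of_neg this]
    push_cast [show d₀ = b₀ ^ 2 - 4 * a₀ * c₀ from rfl]
    ring
  have hssq : s ^ 2 = 4*(a:ℝ)*(c:ℝ) - (b:ℝ)^2 := by
    rw [hsdef, Real.sq_sqrt (le_of_lt hd')]
    have : (d:ℝ) < 0 := by exact_mod_cast hd
    rw [abs_of_neg this]
    push_cast [show d = b ^ 2 - 4 * a * c from rfl]
    ring
  have hmul : Real.sqrt |(d : ℝ) * (d₀ : ℝ)| = s * s₀ := by
    rw [abs_mul, Real.sqrt_mul (abs_nonneg _)]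
  rw [hmul]
  have hz₀ : z₀ = Complex.mk (-(b₀:ℝ)/(2*a₀)) (s₀/(2*a₀)) := by
    apply Complex.ext <;>
      simp [z₀, Complex.div_re, Complex.div_im, Complex.normSq_apply] <;>
      field_simp <;> ring
  have hz : z = Complex.mk (-(b:ℝ)/(2*a)) (s/(2*a)) := by
    apply Complex.ext <;>
      simp [z, Complex.div_re, Complex.div_im, Complex.normSq_apply] <;>
      field_simp <;> ring
  rw [hz₀, hz]
  rw [Complex.sq_norm]
  simp only [Complex.normSq_apply, Complex.sub_re, Complex.sub_im]
  field_simp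
  ring_nf
  linear_combination ((a₀:ℝ)^2) * hssq + ((a:ℝ)^2) * hs₀sq
end

section
/- Let I be a finite set of primes, and let g be a multiplicative function satisfying |g(p^a)| ≤ 2^{4a}/√p for odd a and |g(p^a)| ≤ 2^{4a} for even a, with all p ∈ I satisfying p ≥ 2^{14}. Let ν be the multiplicative function with ν(p^a) = 1/a!. Then ∑_{n : p|n ⇒ p∈I} 8^{Ω(n)} ν(n) |g(n)| / √n ≤ exp(2^{15} ∑_{p∈I} 1/p). -/
open scoped BigOperators

noncomputable def Fg (g : ℕ → ℝ) (n : ℕ) : ℝ :=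
  8 ^ n.primeFactorsList.length *
    (∏ q ∈ n.primeFactors, (1:ℝ) / (Nat.factorial (n.factorization q) : ℝ)) *
    |g n| / Real.sqrt n

lemma Fg_nonneg (g : ℕ → ℝ) (n : ℕ) : 0 ≤ Fg g n := by
  unfold Fg; positivity

lemma Fg_zero (g : ℕ → ℝ) : Fg g 0 = 0 := by
  simp [Fg]

lemma Fg_one (g : ℕ → ℝ) (hg1 : g 1 = 1) : Fg g 1 = 1 := by
  simp [Fg, hg1]

lemma prod_eq_factorization_prod (n : ℕ) :
    (∏ q ∈ n.primeFactors, (1:ℝ) / (Nat.factorial (n.factorization q) : ℝ))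
      = n.factorization.prod (fun _ a => (1:ℝ) / (Nat.factorial a : ℝ)) := by
  rw [Finsupp.prod, Nat.support_factorization]

lemma Fg_mul (g : ℕ → ℝ) (hgmul : ∀ m n : ℕ, Nat.Coprime m n → g (m * n) = g m * g n)
    {m n : ℕ} (h : Nat.Coprime m n) : Fg g (m * n) = Fg g m * Fg g n := by
  rcases eq_or_ne m 0 with rfl | hm
  · simp [Fg_zero]
  rcases eq_or_ne n 0 with rfl | hn
  · simp [Fg_zero]
  unfold Fg
  rw [prod_eq_factorization_prod, prod_eq_factorization_prod, prod_eq_factorization_prod,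
    Nat.factorization_mul hm hn,
    Finsupp.prod_add_index_of_disjoint ?_ (fun _ a => (1:ℝ) / (Nat.factorial a : ℝ)),
    show (m*n).primeFactorsList.length = m.primeFactorsList.length + n.primeFactorsList.length from
      ((Nat.perm_primeFactorsList_mul hm hn).length_eq).trans List.length_append,
    hgmul m n h, abs_mul]
  · push_cast
    rw [Real.sqrt_mul (by positivity)]
    have hsm : (0:ℝ) < Real.sqrt m := Real.sqrt_pos.mpr (by positivity)
    have hsn : (0:ℝ) < Real.sqrt n := Real.sqrt_pos.mpr (by positivity)
    rw [pow_add]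
    field_simp
  · rw [Nat.support_factorization, Nat.support_factorization]
    exact Nat.Coprime.disjoint_primeFactors h

lemma sqrt_natpow (x : ℝ) (hx : 0 ≤ x) (n : ℕ) : Real.sqrt (x ^ n) = (Real.sqrt x) ^ n := by
  induction n with
  | zero => simp
  | succ k ih => rw [pow_succ, pow_succ, Real.sqrt_mul (pow_nonneg hx _), ih]

lemma Fg_prime_pow {g : ℕ → ℝ} {p : ℕ} (hp : p.Prime) (l : ℕ) :
    Fg g (p ^ (l + 1)) =
      8 ^ (l + 1) * (1 / ((l + 1).factorial : ℝ)) * |g (p ^ (l + 1))| / (Real.sqrt p) ^ (l + 1) := by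
  unfold Fg
  rw [hp.primeFactorsList_pow, List.length_replicate,
    Nat.primeFactors_prime_pow (Nat.succ_ne_zero l) hp, Finset.prod_singleton,
    hp.factorization_pow, Finsupp.single_eq_same]
  push_cast
  rw [sqrt_natpow _ (by positivity)]

lemma abs_g_le {g : ℕ → ℝ}
    (hg1 : g 1 = 1)
    (hgodd : ∀ p a : ℕ, p.Prime → Odd a → |g (p ^ a)| ≤ 2 ^ (4 * a) / Real.sqrt p)
    (hgeven : ∀ p a : ℕ, p.Prime → Even a → |g (p ^ a)| ≤ 2 ^ (4 * a))
    {p : ℕ} (hp : p.Prime) (a : ℕ) : |g (p ^ a)| ≤ 2 ^ (4 * a) := by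
  rcases Nat.even_or_odd a with h | h
  · exact hgeven p a hp h
  · refine (hgodd p a hp h).trans ?_
    have h1 : (1:ℝ) ≤ Real.sqrt p := by
      rw [Real.one_le_sqrt]
      exact_mod_cast hp.one_lt.le
    calc (2:ℝ) ^ (4*a) / Real.sqrt p ≤ 2 ^ (4*a) / 1 :=
          div_le_div_of_nonneg_left (by positivity) one_pos h1
      _ = 2 ^ (4*a) := div_one _

lemma summable_Fg {g : ℕ → ℝ} (hg1 : g 1 = 1)
    (hgodd : ∀ p a : ℕ, p.Prime → Odd a → |g (p ^ a)| ≤ 2 ^ (4 * a) / Real.sqrt p)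
    (hgeven : ∀ p a : ℕ, p.Prime → Even a → |g (p ^ a)| ≤ 2 ^ (4 * a))
    {p : ℕ} (hp : p.Prime) : Summable (fun l : ℕ => Fg g (p ^ l)) := by
  refine Summable.of_nonneg_of_le (fun l => Fg_nonneg g _) (fun l => ?_)
    (Real.summable_pow_div_factorial 128)
  rcases l with _ | l
  · simp [Fg_one g hg1, Nat.factorial]
  rw [Fg_prime_pow hp]
  have hs1 : (1:ℝ) ≤ Real.sqrt p := by
    rw [Real.one_le_sqrt]; exact_mod_cast hp.one_lt.le
  have hs1' : (1:ℝ) ≤ (Real.sqrt p) ^ (l+1) := one_le_pow₀ hs1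
  calc 8 ^ (l+1) * (1 / ((l + 1).factorial : ℝ)) * |g (p ^ (l + 1))| / (Real.sqrt p) ^ (l + 1)
      ≤ 8 ^ (l+1) * (1 / ((l + 1).factorial : ℝ)) * 2 ^ (4 * (l+1)) / 1 := by
        gcongr
        exact abs_g_le hg1 hgodd hgeven hp _
    _ = 128 ^ (l+1) / ((l+1).factorial : ℝ) := by
        rw [div_one, show (128:ℝ) = 8 * 2^4 by norm_num, mul_pow, ← pow_mul]
        ring

lemma claimA {g : ℕ → ℝ}
    (hgodd : ∀ p a : ℕ, p.Prime → Odd a → |g (p ^ a)| ≤ 2 ^ (4 * a) / Real.sqrt p)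
    (hgeven : ∀ p a : ℕ, p.Prime → Even a → |g (p ^ a)| ≤ 2 ^ (4 * a))
    {p : ℕ} (hp : p.Prime) (hp14 : 2 ^ 14 ≤ p) (l : ℕ) :
    8 ^ (l + 1) * |g (p ^ (l + 1))| / (Real.sqrt p) ^ (l + 1) ≤ 2 ^ 14 / (p : ℝ) := by
  have hP0 : (0:ℝ) < p := by exact_mod_cast hp.pos
  set s := Real.sqrt p with hs
  have hs0 : 0 < s := Real.sqrt_pos.mpr hP0
  have hs2 : s ^ 2 = p := Real.sq_sqrt hP0.le
  have hP : (2:ℝ) ^ 14 ≤ p := by exact_mod_cast hp14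
  have hpowk : ∀ k : ℕ, (2:ℝ) ^ (14 * k) ≤ (p:ℝ) ^ k := fun k => by
    rw [pow_mul]; exact pow_le_pow_left₀ (by norm_num) hP k
  rcases Nat.even_or_odd (l + 1) with h | h
  · obtain ⟨k, hk⟩ := h
    obtain ⟨j, rfl⟩ : ∃ j, k = j + 1 := ⟨k - 1, by omega⟩
    have e1 : (8:ℝ) ^ (l + 1) * 2 ^ (4 * (l + 1)) = 2 ^ (14 * j) * 2 ^ 14 := by
      rw [show (8:ℝ) = 2 ^ 3 by norm_num, ← pow_mul, ← pow_add, ← pow_add,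
        show 3 * (l + 1) + 4 * (l + 1) = 14 * j + 14 by omega]
    have e2 : s ^ (l + 1) = (p:ℝ) ^ j * p := by
      rw [show l + 1 = 2 * (j + 1) by omega, pow_mul, hs2, pow_succ]
    calc 8 ^ (l + 1) * |g (p ^ (l + 1))| / s ^ (l + 1)
        ≤ 8 ^ (l + 1) * 2 ^ (4 * (l + 1)) / s ^ (l + 1) := by
          gcongr
          exact hgeven p (l + 1) hp ⟨j + 1, hk⟩
      _ = 2 ^ (14 * j) * 2 ^ 14 / ((p:ℝ) ^ j * p) := by rw [e1, e2]
      _ ≤ 2 ^ (14 * j) * 2 ^ 14 / ((2:ℝ) ^ (14 * j) * p) := by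
          gcongr
          exact hpowk j
      _ = 2 ^ 14 / (p:ℝ) := by
          rw [mul_div_mul_left]
          positivity
  · obtain ⟨k, hk⟩ := h
    have e1 : (8:ℝ) ^ (l + 1) * 2 ^ (4 * (l + 1)) = 2 ^ (14 * k) * 2 ^ 7 := by
      rw [show (8:ℝ) = 2 ^ 3 by norm_num, ← pow_mul, ← pow_add, ← pow_add,
        show 3 * (l + 1) + 4 * (l + 1) = 14 * k + 7 by omega]
    have e2 : s * s ^ (l + 1) = (p:ℝ) ^ k * p := by
      rw [show s * s ^ (l+1) = s ^ (l + 2) from (pow_succ' s (l+1)).symm,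
        show l + 2 = 2 * (k + 1) by omega, pow_mul, hs2, pow_succ]
    calc 8 ^ (l + 1) * |g (p ^ (l + 1))| / s ^ (l + 1)
        ≤ 8 ^ (l + 1) * (2 ^ (4 * (l + 1)) / s) / s ^ (l + 1) := by
          gcongr
          exact hgodd p (l + 1) hp ⟨k, hk⟩
      _ = 8 ^ (l + 1) * 2 ^ (4 * (l + 1)) / (s * s ^ (l + 1)) := by
          field_simp
      _ = 2 ^ (14 * k) * 2 ^ 7 / ((p:ℝ) ^ k * p) := by rw [e1, e2]
      _ ≤ 2 ^ (14 * k) * 2 ^ 7 / ((2:ℝ) ^ (14 * k) * p) := by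
          gcongr
          exact hpowk k
      _ = 2 ^ 7 / (p:ℝ) := by
          rw [mul_div_mul_left]
          positivity
      _ ≤ 2 ^ 14 / (p:ℝ) := by gcongr <;> norm_num

lemma Fg_term_le {g : ℕ → ℝ} (hg1 : g 1 = 1)
    (hgodd : ∀ p a : ℕ, p.Prime → Odd a → |g (p ^ a)| ≤ 2 ^ (4 * a) / Real.sqrt p)
    (hgeven : ∀ p a : ℕ, p.Prime → Even a → |g (p ^ a)| ≤ 2 ^ (4 * a))
    {p : ℕ} (hp : p.Prime) (hp14 : 2 ^ 14 ≤ p) (l : ℕ) :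
    Fg g (p ^ (l + 1)) ≤ 2 ^ 14 / (p : ℝ) * (1 / 2) ^ l := by
  have hP0 : (0:ℝ) < p := by exact_mod_cast hp.pos
  have hfac : (2:ℝ) ^ l ≤ ((l + 1).factorial : ℝ) := by
    have := Nat.factorial_mul_pow_le_factorial (m := 1) (n := l)
    simp only [Nat.factorial_one, one_mul] at this
    exact_mod_cast by simpa [Nat.add_comm] using this
  have hfac' : (1 : ℝ) / ((l + 1).factorial : ℝ) ≤ (1 / 2) ^ l := by
    rw [div_pow, one_pow]
    exact one_div_le_one_div_of_le (by positivity) hfac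
  rw [Fg_prime_pow hp,
    show (8:ℝ) ^ (l+1) * (1 / ((l + 1).factorial : ℝ)) * |g (p ^ (l + 1))| / (Real.sqrt p) ^ (l + 1)
      = (8 ^ (l+1) * |g (p ^ (l + 1))| / (Real.sqrt p) ^ (l + 1)) * (1 / ((l + 1).factorial : ℝ))
      from by ring]
  exact mul_le_mul (claimA hgodd hgeven hp hp14 l) hfac' (by positivity) (by positivity)

set_option maxHeartbeats 800000 in
lemma local_bound {g : ℕ → ℝ} (hg1 : g 1 = 1)
    (hgodd : ∀ p a : ℕ, p.Prime → Odd a → |g (p ^ a)| ≤ 2 ^ (4 * a) / Real.sqrt p)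
    (hgeven : ∀ p a : ℕ, p.Prime → Even a → |g (p ^ a)| ≤ 2 ^ (4 * a))
    {p : ℕ} (hp : p.Prime) (hp14 : 2 ^ 14 ≤ p) :
    ∑' l : ℕ, Fg g (p ^ l) ≤ 1 + 2 ^ 15 / (p : ℝ) := by
  have hP0 : (0:ℝ) < p := by exact_mod_cast hp.pos
  have hsum := summable_Fg hg1 hgodd hgeven hp (g := g)
  rw [Summable.tsum_eq_zero_add hsum]
  simp only [pow_zero, Fg_one g hg1]
  gcongr
  have hgeo : Summable (fun l : ℕ => 2 ^ 14 / (p : ℝ) * (1 / 2) ^ l) :=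
    (summable_geometric_of_lt_one (by norm_num) (by norm_num)).mul_left _
  calc ∑' l : ℕ, Fg g (p ^ (l + 1))
      ≤ ∑' l : ℕ, 2 ^ 14 / (p : ℝ) * (1 / 2) ^ l :=
        Summable.tsum_le_tsum (fun l => Fg_term_le hg1 hgodd hgeven hp hp14 l)
          ((summable_nat_add_iff 1).mpr hsum) hgeo
    _ = 2 ^ 14 / (p : ℝ) * (1 - 1 / 2)⁻¹ := by
        rw [tsum_mul_left, tsum_geometric_of_lt_one (by norm_num) (by norm_num)]
    _ = 2 ^ 15 / (p : ℝ) := by norm_num; ring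

theorem stmt13 (I : Finset ℕ) (hI : ∀ p ∈ I, p.Prime) (hIbig : ∀ p ∈ I, 2 ^ 14 ≤ p)
    (g : ℕ → ℝ) (hg1 : g 1 = 1)
    (hgmul : ∀ m n : ℕ, Nat.Coprime m n → g (m * n) = g m * g n)
    (hgodd : ∀ p a : ℕ, p.Prime → Odd a → |g (p ^ a)| ≤ 2 ^ (4 * a) / Real.sqrt p)
    (hgeven : ∀ p a : ℕ, p.Prime → Even a → |g (p ^ a)| ≤ 2 ^ (4 * a)) :
    (∑' n : ℕ,
        if n ≠ 0 ∧ n.primeFactors ⊆ I then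
          8 ^ n.primeFactorsList.length *
            (∏ q ∈ n.primeFactors, (1:ℝ) / (Nat.factorial (n.factorization q) : ℝ)) *
            |g n| / Real.sqrt n
        else 0)
      ≤ Real.exp (2 ^ 15 * ∑ p ∈ I, 1 / (p : ℝ)) := by
  have hF1 : Fg g 1 = 1 := Fg_one g hg1
  have hFmul : ∀ {m n : ℕ}, Nat.Coprime m n → Fg g (m * n) = Fg g m * Fg g n :=
    fun h => Fg_mul g hgmul h
  have hsum : ∀ {p : ℕ}, p.Prime → Summable (fun n : ℕ => ‖Fg g (p ^ n)‖) := by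
    intro p hp
    simpa [Real.norm_of_nonneg (Fg_nonneg g _)] using summable_Fg hg1 hgodd hgeven hp (g := g)
  have hEuler := (EulerProduct.summable_and_hasSum_factoredNumbers_prod_filter_prime_tsum
    hF1 hFmul hsum I).2.tsum_eq
  have hLHS : (∑' n : ℕ,
        if n ≠ 0 ∧ n.primeFactors ⊆ I then
          8 ^ n.primeFactorsList.length *
            (∏ q ∈ n.primeFactors, (1:ℝ) / (Nat.factorial (n.factorization q) : ℝ)) *
            |g n| / Real.sqrt n
        else 0)
      = ∑' m : Nat.factoredNumbers (I : Finset ℕ), Fg g m := by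
    rw [tsum_subtype]
    congr 1; funext n
    by_cases hn : n ∈ Nat.factoredNumbers I
    · rw [if_pos (Nat.mem_factoredNumbers_iff_primeFactors_subset.mp hn),
        Set.indicator_of_mem hn]
      rfl
    · rw [if_neg (fun hc => hn (Nat.mem_factoredNumbers_iff_primeFactors_subset.mpr hc)),
        Set.indicator_of_notMem hn]
  rw [hLHS, hEuler, Finset.filter_true_of_mem hI]
  calc ∏ p ∈ I, ∑' n : ℕ, Fg g (p ^ n)
      ≤ ∏ p ∈ I, Real.exp (2 ^ 15 * (1 / (p : ℝ))) := by
        apply Finset.prod_le_prod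
        · intro p _
          exact tsum_nonneg fun l => Fg_nonneg g _
        · intro p hp
          refine (local_bound hg1 hgodd hgeven (hI p hp) (hIbig p hp)).trans ?_
          rw [mul_one_div]
          linarith [Real.add_one_le_exp ((2:ℝ) ^ 15 / (p : ℝ))]
    _ = Real.exp (∑ p ∈ I, 2 ^ 15 * (1 / (p : ℝ))) := (Real.exp_sum I _).symm
    _ = Real.exp (2 ^ 15 * ∑ p ∈ I, 1 / (p : ℝ)) := by rw [Finset.mul_sum]
end

section
/- Let k be a nonnegative integer, I ⊂ [2,∞) a finite set of primes, ν the multiplicative function with ν(p^a) = 1/a!, b a completely multiplicative function with |b(p)| ≤ 4 for all p, and g a multiplicative function with |g(n)| ≤ 2^{4Ω(n)}/√v whenever n = u²v with v squarefree. Then (2k)! | ∑_{n: p|n ⇒ p∈I, Ω(n) = 2k} b(n) ν(n) g(n) / √n | ≤ e^{O(k)} ( (∑_{p∈I} 1/p)^{2k} + (k ∑_{p∈I} 1/p)^k ), with an absolute implied constant. -/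
open Finset

lemma aux_fact_upper : ∀ (m n : ℕ), (n + m).factorial ≤ n.factorial * (n + m) ^ m
  | 0, n => by simp
  | m + 1, n => by
    have h1 := aux_fact_upper m n
    calc (n + (m + 1)).factorial = (n + m + 1) * (n + m).factorial := by
          rw [← Nat.add_assoc, Nat.factorial_succ]
      _ ≤ (n + m + 1) * (n.factorial * (n + m) ^ m) := Nat.mul_le_mul_left _ h1
      _ ≤ (n + m + 1) * (n.factorial * (n + m + 1) ^ m) := by
          exact Nat.mul_le_mul_left _ (Nat.mul_le_mul_left _ (Nat.pow_le_pow_left (Nat.le_succ _) m))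
      _ = n.factorial * (n + (m + 1)) ^ (m + 1) := by ring

lemma aux_b_bound (b : ℕ → ℝ) (hb1 : b 1 = 1) (hbm : ∀ m n : ℕ, b (m * n) = b m * b n)
    (hbp : ∀ p : ℕ, p.Prime → |b p| ≤ 4) :
    ∀ L : List ℕ, (∀ p ∈ L, p.Prime) → |b L.prod| ≤ 4 ^ L.length := by
  intro L
  induction L with
  | nil => simp [hb1]
  | cons p L ih =>
    intro h
    rw [List.prod_cons, hbm, abs_mul, List.length_cons, pow_succ, mul_comm (4 ^ L.length) 4]
    exact mul_le_mul (hbp p (h p (by simp))) (ih fun q hq => h q (by simp [hq]))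
      (abs_nonneg _) (by norm_num)

lemma aux_multinomial_sum (I : Finset ℕ) (x : ℕ → ℝ) (m : ℕ) :
    ∑ f ∈ I.piAntidiag m, (∏ p ∈ I, x p ^ f p) / (∏ p ∈ I, ((f p).factorial : ℝ))
      = (∑ p ∈ I, x p) ^ m / m.factorial := by
  classical
  rw [Finset.sum_pow_eq_sum_piAntidiag I x m, Finset.sum_div]
  refine Finset.sum_congr rfl fun f hf => ?_
  obtain ⟨hsum, -⟩ := Finset.mem_piAntidiag.1 hf
  have key : ((∏ p ∈ I, (f p).factorial : ℕ) : ℝ) * (Nat.multinomial I f : ℝ)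
      = (m.factorial : ℝ) := by
    rw [← Nat.cast_mul, Nat.multinomial_spec, hsum]
  have h1 : (0:ℝ) < ∏ p ∈ I, ((f p).factorial : ℝ) := by positivity
  have h2 : (0:ℝ) < (m.factorial : ℝ) := by positivity
  rw [div_eq_div_iff h1.ne' h2.ne', ← key]
  push_cast
  ring

lemma aux_multinomial_sum' (I : Finset ℕ) (m : ℕ) :
    ∑ f ∈ I.piAntidiag m,
        (∏ p ∈ I, ((1:ℝ) / (p:ℝ)) ^ f p) / (∏ p ∈ I, ((f p).factorial : ℝ))
      = (∑ p ∈ I, (1:ℝ) / (p:ℝ)) ^ m / m.factorial := by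
  simpa using aux_multinomial_sum I (fun p => (1:ℝ) / (p:ℝ)) m

lemma aux_div_mod_fact (a : ℕ) : (a / 2).factorial * (a % 2).factorial ≤ a.factorial := by
  have h1 : (a % 2).factorial = 1 := by
    rcases Nat.mod_two_eq_zero_or_one a with h | h <;> rw [h] <;> rfl
  rw [h1, mul_one]
  exact Nat.factorial_le (Nat.div_le_self a 2)

set_option maxHeartbeats 1000000 in
theorem stmt14 :
    ∃ C : ℝ, 0 < C ∧
      ∀ (k : ℕ) (I : Finset ℕ), (∀ p ∈ I, p.Prime) →
      ∀ (b g : ℕ → ℝ), b 1 = 1 → (∀ m n : ℕ, b (m * n) = b m * b n) →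
      (∀ p : ℕ, p.Prime → |b p| ≤ 4) →
      (∀ u v : ℕ, Squarefree v →
        |g (u ^ 2 * v)| ≤ 2 ^ (4 * (u ^ 2 * v).primeFactorsList.length) / Real.sqrt v) →
      (Nat.factorial (2 * k) : ℝ) *
        |∑' n : ℕ,
          if n ≠ 0 ∧ n.primeFactors ⊆ I ∧ n.primeFactorsList.length = 2 * k then
            b n * (∏ p ∈ n.primeFactors, (1:ℝ) / (Nat.factorial (n.factorization p) : ℝ)) *
              g n / Real.sqrt n
          else 0|
        ≤ Real.exp (C * k) *
            ((∑ p ∈ I, 1 / (p : ℝ)) ^ (2 * k) + ((k : ℝ) * ∑ p ∈ I, 1 / (p : ℝ)) ^ k) := by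
  classical
  refine ⟨30, by norm_num, ?_⟩
  intro k I hI b g hb1 hbm hbp hg
  set P : ℝ := ∑ p ∈ I, 1 / (p : ℝ) with hP
  have hP0 : 0 ≤ P := Finset.sum_nonneg fun p _ => by positivity
  set F : ℕ → ℝ := fun n =>
    if n ≠ 0 ∧ n.primeFactors ⊆ I ∧ n.primeFactorsList.length = 2 * k then
      b n * (∏ p ∈ n.primeFactors, (1:ℝ) / (Nat.factorial (n.factorization p) : ℝ)) *
        g n / Real.sqrt n
    else 0 with hF
  set N : ℕ := (∏ p ∈ I, p) ^ (2 * k) with hN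
  have hNpos : 0 < N := pow_pos (Finset.prod_pos fun p hp => (hI p hp).pos) _
  set S : Finset ℕ := (Finset.range (N + 1)).filter
    (fun n => n ≠ 0 ∧ n.primeFactors ⊆ I ∧ n.primeFactorsList.length = 2 * k) with hS
  -- basic facts about members
  have hfact : ∀ n : ℕ, n ≠ 0 → n.primeFactors ⊆ I → n.primeFactorsList.length = 2 * k →
      (∑ p ∈ I, n.factorization p = 2 * k ∧ n = ∏ p ∈ I, p ^ n.factorization p) := by
    intro n hn0 hsub hlen
    have hzero : ∀ p ∈ I, p ∉ n.primeFactors → n.factorization p = 0 := by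
      intro p _ hp
      rwa [← Nat.support_factorization, Finsupp.notMem_support_iff] at hp
    have hsum' : ∑ p ∈ n.primeFactors, n.factorization p = n.primeFactorsList.length := by
      have h := Multiset.toFinset_sum_count_eq (↑n.primeFactorsList : Multiset ℕ)
      rw [Multiset.coe_card] at h
      calc ∑ p ∈ n.primeFactors, n.factorization p
          = ∑ p ∈ (↑n.primeFactorsList : Multiset ℕ).toFinset,
              Multiset.count p (↑n.primeFactorsList : Multiset ℕ) := by
            refine Finset.sum_congr rfl fun p _ => ?_
            rw [← Nat.primeFactorsList_count_eq, Multiset.coe_count]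
        _ = n.primeFactorsList.length := h
    constructor
    · rw [← Finset.sum_subset hsub hzero, hsum', hlen]
    · conv_lhs => rw [← Nat.factorization_prod_pow_eq_self hn0]
      rw [Finsupp.prod, Nat.support_factorization]
      exact Finset.prod_subset hsub fun p hp hnp => by rw [hzero p hp hnp, pow_zero]
  have hdvd : ∀ n : ℕ, n ≠ 0 → n.primeFactors ⊆ I → n.primeFactorsList.length = 2 * k →
      n ∣ N := by
    intro n hn0 hsub hlen
    obtain ⟨hsum, hneq⟩ := hfact n hn0 hsub hlen
    rw [hN, ← Finset.prod_pow]
    calc n = ∏ p ∈ I, p ^ n.factorization p := hneq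
      _ ∣ ∏ p ∈ I, p ^ (2 * k) := by
          refine Finset.prod_dvd_prod_of_dvd _ _ fun p hp => pow_dvd_pow p ?_
          calc n.factorization p ≤ ∑ q ∈ I, n.factorization q :=
                Finset.single_le_sum (fun q _ => Nat.zero_le _) hp
            _ = 2 * k := hsum
  have htsum : (∑' n : ℕ, F n) = ∑ n ∈ S, F n := by
    refine tsum_eq_sum fun n hn => ?_
    rw [hF]
    by_cases hpred : n ≠ 0 ∧ n.primeFactors ⊆ I ∧ n.primeFactorsList.length = 2 * k
    · exfalso
      apply hn
      rw [hS, Finset.mem_filter, Finset.mem_range]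
      exact ⟨Nat.lt_succ_of_le (Nat.le_of_dvd hNpos (hdvd n hpred.1 hpred.2.1 hpred.2.2)), hpred⟩
    · exact if_neg hpred
  -- the target combinatorial data
  set W : (ℕ → ℕ) → ℝ := fun f =>
    (∏ p ∈ I, ((1:ℝ) / (p:ℝ)) ^ f p) / (∏ p ∈ I, ((f p).factorial : ℝ)) with hW
  have hW0 : ∀ f, 0 ≤ W f := by
    intro f
    rw [hW]
    positivity
  set T : Finset ((_ : ℕ) × ((ℕ → ℕ) × (ℕ → ℕ))) :=
    (Finset.range (k+1)).sigma
      (fun l => (I.piAntidiag l) ×ˢ (I.piAntidiag (2*k - 2*l))) with hT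
  set ι : ℕ → (_ : ℕ) × ((ℕ → ℕ) × (ℕ → ℕ)) := fun n =>
    ⟨∑ p ∈ I, n.factorization p / 2,
      (fun p => n.factorization p / 2, fun p => n.factorization p % 2)⟩ with hι
  -- pointwise bound
  have hmain : ∀ n ∈ S, |F n| ≤ 2 ^ (12 * k) * (W (ι n).2.1 * W (ι n).2.2) := by
    intro n hnS
    obtain ⟨-, hn0, hsub, hlen⟩ := Finset.mem_filter.1 hnS
    obtain ⟨hsum, hneq⟩ := hfact n hn0 hsub hlen
    set u : ℕ := ∏ p ∈ I, p ^ (n.factorization p / 2) with hu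
    set v : ℕ := ∏ p ∈ I, p ^ (n.factorization p % 2) with hv
    have hupos : 0 < u := Finset.prod_pos fun p hp => pow_pos (hI p hp).pos _
    have hvpos : 0 < v := Finset.prod_pos fun p hp => pow_pos (hI p hp).pos _
    have huv : u ^ 2 * v = n := by
      rw [hu, hv, ← Finset.prod_pow, ← Finset.prod_mul_distrib]
      conv_rhs => rw [hneq]
      refine Finset.prod_congr rfl fun p hp => ?_
      rw [← pow_mul, ← pow_add]
      congr 1
      omega
    have hvsf : Squarefree v := by
      refine Nat.squarefree_of_factorization_le_one hvpos.ne' fun q => ?_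
      rw [hv, Nat.factorization_prod fun p hp => pow_ne_zero _ (hI p hp).pos.ne',
        Finset.sum_apply']
      have hle : ∀ p ∈ I,
          ((p ^ (n.factorization p % 2)).factorization) q ≤ if p = q then 1 else 0 := by
        intro p hp
        rw [(hI p hp).factorization_pow, Finsupp.single_apply]
        split <;> omega
      calc ∑ p ∈ I, ((p ^ (n.factorization p % 2)).factorization) q
          ≤ ∑ p ∈ I, (if p = q then 1 else 0) := Finset.sum_le_sum hle
        _ ≤ 1 := by rw [Finset.sum_ite_eq' I q fun _ => 1]; split <;> omega
    have hb' : |b n| ≤ 4 ^ (2 * k) := by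
      have h := aux_b_bound b hb1 hbm hbp n.primeFactorsList
        (fun p hp => Nat.prime_of_mem_primeFactorsList hp)
      rwa [Nat.prod_primeFactorsList hn0, hlen] at h
    have hg' : |g n| ≤ 2 ^ (8 * k) / Real.sqrt v := by
      have h := hg u v hvsf
      rw [huv, hlen] at h
      rwa [show 4 * (2 * k) = 8 * k by ring] at h
    set A : ℝ := ∏ p ∈ I, (1:ℝ) / ((n.factorization p).factorial : ℝ) with hA
    have hν : (∏ p ∈ n.primeFactors, (1:ℝ) / ((n.factorization p).factorial : ℝ)) = A := by
      refine Finset.prod_subset hsub fun p _ hp => ?_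
      have h0 : n.factorization p = 0 := by
        rwa [← Nat.support_factorization, Finsupp.notMem_support_iff] at hp
      rw [h0]
      norm_num
    have hν0 : (0:ℝ) ≤ A := by
      rw [hA]
      exact Finset.prod_nonneg fun p _ => by positivity
    have hcast : (n:ℝ) = ((u:ℝ))^2 * (v:ℝ) := by exact_mod_cast congrArg (Nat.cast (R := ℝ)) huv.symm
    have hsq : Real.sqrt n = (u:ℝ) * Real.sqrt v := by
      rw [hcast, Real.sqrt_mul (by positivity), Real.sqrt_sq (by positivity)]
    have hFn : F n = b n * A * g n / Real.sqrt n := by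
      simp only [hF]
      rw [if_pos ⟨hn0, hsub, hlen⟩, hν]
    have hsv : (0:ℝ) < Real.sqrt v := Real.sqrt_pos.2 (by exact_mod_cast hvpos)
    have hu1 : (0:ℝ) < (u:ℝ) := by exact_mod_cast hupos
    have hvv : Real.sqrt v * Real.sqrt v = (v:ℝ) := Real.mul_self_sqrt (by positivity)
    have h4 : ((4:ℝ)^(2*k) * 2^(8*k)) = 2^(12*k) := by
      rw [show (4:ℝ) = 2^2 by norm_num, ← pow_mul, ← pow_add]
      congr 1
      ring
    -- the key product inequality
    have hufu : (u:ℝ) = ∏ p ∈ I, (p:ℝ) ^ (n.factorization p / 2) := by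
      rw [hu]
      push_cast
      rfl
    have hvfv : (v:ℝ) = ∏ p ∈ I, (p:ℝ) ^ (n.factorization p % 2) := by
      rw [hv]
      push_cast
      rfl
    have h1u : ((u:ℝ))⁻¹ = ∏ p ∈ I, ((1:ℝ)/(p:ℝ))^(n.factorization p / 2) := by
      rw [hufu, ← Finset.prod_inv_distrib]
      exact Finset.prod_congr rfl fun p _ => by rw [one_div, inv_pow]
    have h1v : ((v:ℝ))⁻¹ = ∏ p ∈ I, ((1:ℝ)/(p:ℝ))^(n.factorization p % 2) := by
      rw [hvfv, ← Finset.prod_inv_distrib]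
      exact Finset.prod_congr rfl fun p _ => by rw [one_div, inv_pow]
    have key : A / ((u:ℝ)*(v:ℝ)) = ∏ p ∈ I,
        ((1:ℝ)/((n.factorization p).factorial:ℝ) *
          (((1:ℝ)/(p:ℝ))^(n.factorization p / 2) * ((1:ℝ)/(p:ℝ))^(n.factorization p % 2))) := by
      rw [Finset.prod_mul_distrib, Finset.prod_mul_distrib, ← h1u, ← h1v, ← hA]
      rw [div_eq_mul_inv, mul_inv]
    have hWW : W (fun p => n.factorization p / 2) * W (fun p => n.factorization p % 2)
        = ∏ p ∈ I, ((((1:ℝ)/(p:ℝ))^(n.factorization p / 2)/((n.factorization p / 2).factorial:ℝ)) *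
            (((1:ℝ)/(p:ℝ))^(n.factorization p % 2)/((n.factorization p % 2).factorial:ℝ))) := by
      simp only [hW]
      rw [div_mul_div_comm, ← Finset.prod_mul_distrib, ← Finset.prod_mul_distrib,
        ← Finset.prod_div_distrib]
      exact Finset.prod_congr rfl fun p _ => (div_mul_div_comm _ _ _ _).symm
    have hAleq : A / ((u:ℝ)*(v:ℝ))
        ≤ W (fun p => n.factorization p / 2) * W (fun p => n.factorization p % 2) := by
      rw [key, hWW]
      refine Finset.prod_le_prod (fun p _ => by positivity) (fun p hp => ?_)
      have hfac : ((n.factorization p / 2).factorial : ℝ) * ((n.factorization p % 2).factorial : ℝ)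
          ≤ ((n.factorization p).factorial : ℝ) := by exact_mod_cast aux_div_mod_fact _
      calc (1:ℝ)/((n.factorization p).factorial:ℝ) *
            (((1:ℝ)/(p:ℝ))^(n.factorization p / 2) * ((1:ℝ)/(p:ℝ))^(n.factorization p % 2))
          = (((1:ℝ)/(p:ℝ))^(n.factorization p / 2) * ((1:ℝ)/(p:ℝ))^(n.factorization p % 2))
              / ((n.factorization p).factorial:ℝ) := by ring
        _ ≤ (((1:ℝ)/(p:ℝ))^(n.factorization p / 2) * ((1:ℝ)/(p:ℝ))^(n.factorization p % 2))
              / (((n.factorization p / 2).factorial : ℝ) * ((n.factorization p % 2).factorial : ℝ)) := by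
            gcongr
        _ = ((1:ℝ)/(p:ℝ))^(n.factorization p / 2)/((n.factorization p / 2).factorial:ℝ) *
              (((1:ℝ)/(p:ℝ))^(n.factorization p % 2)/((n.factorization p % 2).factorial:ℝ)) := by
            ring
    have hιn1 : (ι n).2.1 = fun p => n.factorization p / 2 := rfl
    have hιn2 : (ι n).2.2 = fun p => n.factorization p % 2 := rfl
    rw [hιn1, hιn2, hFn, abs_div, abs_mul, abs_mul, abs_of_nonneg hν0,
      abs_of_nonneg (Real.sqrt_nonneg _), hsq]
    calc |b n| * A * |g n| / ((u:ℝ) * Real.sqrt v)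
        ≤ 4^(2*k) * A * ((2:ℝ)^(8*k)/Real.sqrt v) / ((u:ℝ) * Real.sqrt v) := by
          gcongr
      _ = ((4:ℝ)^(2*k) * 2^(8*k)) * (A / ((u:ℝ) * (Real.sqrt v * Real.sqrt v))) := by
          field_simp
      _ = 2^(12*k) * (A / ((u:ℝ) * (v:ℝ))) := by rw [hvv, h4]
      _ ≤ 2^(12*k) * (W (fun p => n.factorization p / 2) * W (fun p => n.factorization p % 2)) := by
          gcongr
  -- membership
  have hmem : ∀ n ∈ S, ι n ∈ T := by
    intro n hnS
    obtain ⟨-, hn0, hsub, hlen⟩ := Finset.mem_filter.1 hnS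
    obtain ⟨hsum, -⟩ := hfact n hn0 hsub hlen
    have hsupp : ∀ p : ℕ, n.factorization p ≠ 0 → p ∈ I := by
      intro p hp
      refine hsub ?_
      rw [← Nat.support_factorization]
      exact Finsupp.mem_support_iff.2 hp
    have h2 : 2 * (∑ p ∈ I, n.factorization p / 2) ≤ ∑ p ∈ I, n.factorization p := by
      rw [Finset.mul_sum]
      exact Finset.sum_le_sum fun p _ => by omega
    have h3 : ∑ p ∈ I, (2 * (n.factorization p / 2) + n.factorization p % 2)
        = ∑ p ∈ I, n.factorization p := Finset.sum_congr rfl fun p _ => by omega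
    rw [Finset.sum_add_distrib, ← Finset.mul_sum] at h3
    refine Finset.mem_sigma.2 ⟨Finset.mem_range.2
      (show (∑ p ∈ I, n.factorization p / 2) < k + 1 by omega),
      Finset.mem_product.2 ⟨Finset.mem_piAntidiag.2 ⟨rfl, fun p hp =>
        hsupp p (fun h0 => hp (show n.factorization p / 2 = 0 by omega))⟩,
      Finset.mem_piAntidiag.2 ⟨(show (∑ p ∈ I, n.factorization p % 2)
          = 2 * k - 2 * (∑ p ∈ I, n.factorization p / 2) by omega), fun p hp =>
        hsupp p (fun h0 => hp (show n.factorization p % 2 = 0 by omega))⟩⟩⟩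
  -- injectivity
  have hinj : ∀ x ∈ S, ∀ y ∈ S, ι x = ι y → x = y := by
    intro x hx y hy hxy
    obtain ⟨-, hx0, -, -⟩ := Finset.mem_filter.1 hx
    obtain ⟨-, hy0, -, -⟩ := Finset.mem_filter.1 hy
    refine Nat.factorization_inj hx0 hy0 ?_
    have h1 : ∀ p : ℕ, x.factorization p / 2 = y.factorization p / 2 := fun p =>
      congrFun (congrArg (fun z => z.2.1) hxy) p
    have h2 : ∀ p : ℕ, x.factorization p % 2 = y.factorization p % 2 := fun p =>
      congrFun (congrArg (fun z => z.2.2) hxy) p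
    ext p
    have := h1 p
    have := h2 p
    omega
  -- sum over T
  have hTsum : ∑ x ∈ T, 2 ^ (12*k) * (W x.2.1 * W x.2.2)
      = 2 ^ (12*k) * ∑ l ∈ Finset.range (k+1),
          (P ^ l / (l.factorial:ℝ)) * (P ^ (2*k-2*l) / ((2*k-2*l).factorial:ℝ)) := by
    rw [hT, Finset.sum_sigma]
    have hin : ∀ l ∈ Finset.range (k+1),
        ∑ s ∈ (I.piAntidiag l) ×ˢ (I.piAntidiag (2*k-2*l)),
            2 ^ (12*k) * (W s.1 * W s.2)
          = 2 ^ (12*k) * ((P ^ l / (l.factorial:ℝ)) * (P ^ (2*k-2*l) / ((2*k-2*l).factorial:ℝ))) := by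
      intro l hl
      rw [← Finset.mul_sum]
      congr 1
      rw [Finset.sum_product, ← Finset.sum_mul_sum]
      simp only [hW]
      rw [aux_multinomial_sum' I l, aux_multinomial_sum' I (2*k-2*l), ← hP]
    rw [Finset.sum_congr rfl hin, ← Finset.mul_sum]
  -- per-term numeric bound
  have hfinal : ∀ l ∈ Finset.range (k+1),
      ((2*k).factorial : ℝ) * ((P ^ l / (l.factorial:ℝ)) * (P ^ (2*k-2*l) / ((2*k-2*l).factorial:ℝ)))
        ≤ 4 ^ k * Real.exp k * (P ^ (2*k) + ((k:ℝ) * P) ^ k) := by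
    intro l hl
    have hlk : l ≤ k := Nat.lt_succ_iff.1 (Finset.mem_range.1 hl)
    have hfl : (0:ℝ) < (l.factorial : ℝ) := by positivity
    have hf2 : (0:ℝ) < ((2*k-2*l).factorial : ℝ) := by positivity
    have hf1 : ((2*k).factorial : ℝ) ≤ ((2*k-2*l).factorial : ℝ) * (((2*k:ℕ)):ℝ) ^ (2*l) := by
      have h := aux_fact_upper (2*l) (2*k - 2*l)
      rw [show 2*k - 2*l + 2*l = 2*k by omega] at h
      exact_mod_cast h
    have hPl : P ^ l * P ^ (2*k-2*l) = P ^ (2*k-l) := by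
      rw [← pow_add]
      congr 1
      omega
    have hcast : (((2*k:ℕ)):ℝ) ^ (2*l) = 4^l * ((k:ℝ)^l * (k:ℝ)^l) := by
      push_cast
      rw [pow_mul, show ((2:ℝ)*(k:ℝ))^2 = 4 * ((k:ℝ)*(k:ℝ)) by ring, mul_pow, mul_pow]
    have hke : (k:ℝ) ^ l / (l.factorial:ℝ) ≤ Real.exp k := by
      have h := Real.sum_le_exp_of_nonneg (by positivity : (0:ℝ) ≤ (k:ℝ)) (l+1)
      refine le_trans ?_ h
      exact Finset.single_le_sum (f := fun i => (k:ℝ)^i / (i.factorial:ℝ))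
        (fun i _ => by positivity) (Finset.self_mem_range_succ l)
    have hk0 : (0:ℝ) ≤ (k:ℝ) := by positivity
    have e1 : 2*k-l = k + (k-l) := by omega
    have e2 : k-l+l = k := by omega
    have hPk : (k:ℝ) ^ l * P ^ (2*k-l) ≤ P ^ (2*k) + ((k:ℝ) * P) ^ k := by
      rcases le_total P (k:ℝ) with h | h
      · have h1 : (k:ℝ)^l * P^(2*k-l) = P^k * (P^(k-l) * (k:ℝ)^l) := by
          rw [e1, pow_add]
          ring
        have h2 : P^(k-l) * (k:ℝ)^l ≤ (k:ℝ)^(k-l) * (k:ℝ)^l :=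
          mul_le_mul_of_nonneg_right (pow_le_pow_left₀ hP0 h _) (by positivity)
        have h3 : P^k * ((k:ℝ)^(k-l) * (k:ℝ)^l) = ((k:ℝ)*P)^k := by
          rw [← pow_add, e2, mul_pow]
          ring
        rw [h1]
        refine le_trans (mul_le_mul_of_nonneg_left h2 (by positivity)) ?_
        rw [h3]
        exact le_add_of_nonneg_left (by positivity)
      · have h2 : (k:ℝ)^l ≤ P^l := pow_le_pow_left₀ hk0 h l
        have h3 : P^l * P^(2*k-l) = P^(2*k) := by
          rw [← pow_add]
          congr 1
          omega
        refine le_trans (mul_le_mul_of_nonneg_right h2 (by positivity)) ?_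
        rw [h3]
        exact le_add_of_nonneg_right (by positivity)
    calc ((2*k).factorial : ℝ) * ((P^l/(l.factorial:ℝ)) * (P^(2*k-2*l)/((2*k-2*l).factorial:ℝ)))
        = ((2*k).factorial : ℝ) * P^(2*k-l) / ((l.factorial:ℝ) * ((2*k-2*l).factorial:ℝ)) := by
          rw [← hPl]
          field_simp
      _ ≤ (((2*k-2*l).factorial : ℝ) * (((2*k:ℕ)):ℝ)^(2*l)) * P^(2*k-l)
            / ((l.factorial:ℝ) * ((2*k-2*l).factorial:ℝ)) := by
          gcongr
      _ = 4^l * ((k:ℝ)^l / (l.factorial:ℝ)) * ((k:ℝ)^l * P^(2*k-l)) := by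
          rw [hcast]
          field_simp
      _ ≤ 4^k * Real.exp k * (P^(2*k) + ((k:ℝ)*P)^k) := by
          refine mul_le_mul (mul_le_mul (pow_le_pow_right₀ (by norm_num) hlk) hke
            (by positivity) (by positivity)) hPk (by positivity) (by positivity)
  -- final numeric constant bound
  have hnum : (2:ℝ)^(12*k) * ((k:ℝ)+1) * 4^k * Real.exp k ≤ Real.exp (30*k) := by
    have e2 : (2:ℝ) ≤ Real.exp 1 := by
      have := Real.add_one_le_exp (1:ℝ)
      linarith
    have h1 : (2:ℝ)^(12*k) ≤ Real.exp (12*k) := by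
      calc (2:ℝ)^(12*k) ≤ (Real.exp 1)^(12*k) := pow_le_pow_left₀ (by norm_num) e2 _
        _ = Real.exp (12*k) := by
          rw [← Real.exp_nat_mul]
          push_cast
          ring_nf
    have h2 : ((k:ℝ)+1) ≤ Real.exp k := Real.add_one_le_exp (k:ℝ)
    have h3 : (4:ℝ)^k ≤ Real.exp (2*k) := by
      calc (4:ℝ)^k = 2^(2*k) := by rw [pow_mul]; norm_num
        _ ≤ (Real.exp 1)^(2*k) := pow_le_pow_left₀ (by norm_num) e2 _
        _ = Real.exp (2*k) := by
          rw [← Real.exp_nat_mul]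
          push_cast
          ring_nf
    calc (2:ℝ)^(12*k) * ((k:ℝ)+1) * 4^k * Real.exp k
        ≤ Real.exp (12*k) * Real.exp k * Real.exp (2*k) * Real.exp k := by
          refine mul_le_mul (mul_le_mul (mul_le_mul h1 h2 (by positivity) (by positivity))
            h3 (by positivity) (by positivity)) le_rfl (by positivity) (by positivity)
      _ = Real.exp (12*(k:ℝ) + (k:ℝ) + 2*(k:ℝ) + (k:ℝ)) := by
          rw [← Real.exp_add, ← Real.exp_add, ← Real.exp_add]
      _ ≤ Real.exp (30*k) := by
          rw [Real.exp_le_exp]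
          have : (0:ℝ) ≤ (k:ℝ) := Nat.cast_nonneg k
          nlinarith
  have hA0 : 0 ≤ P ^ (2*k) + ((k:ℝ) * P) ^ k := by positivity
  calc ((2*k).factorial : ℝ) * |∑' n : ℕ, F n|
      = ((2*k).factorial : ℝ) * |∑ n ∈ S, F n| := by rw [htsum]
    _ ≤ ((2*k).factorial : ℝ) * ∑ n ∈ S, |F n| := by
        gcongr
        exact Finset.abs_sum_le_sum_abs _ _
    _ ≤ ((2*k).factorial : ℝ) * ∑ x ∈ T, 2 ^ (12*k) * (W x.2.1 * W x.2.2) := by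
        refine mul_le_mul_of_nonneg_left ?_ (by positivity)
        calc ∑ n ∈ S, |F n| ≤ ∑ n ∈ S, 2 ^ (12*k) * (W (ι n).2.1 * W (ι n).2.2) :=
              Finset.sum_le_sum hmain
          _ = ∑ x ∈ S.image ι, 2 ^ (12*k) * (W x.2.1 * W x.2.2) := by
              rw [Finset.sum_image hinj]
          _ ≤ ∑ x ∈ T, 2 ^ (12*k) * (W x.2.1 * W x.2.2) := by
              refine Finset.sum_le_sum_of_subset_of_nonneg ?_ fun x _ _ =>
                mul_nonneg (by positivity) (mul_nonneg (hW0 _) (hW0 _))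
              intro x hx
              obtain ⟨n, hnS, rfl⟩ := Finset.mem_image.1 hx
              exact hmem n hnS
    _ = 2 ^ (12*k) * ∑ l ∈ Finset.range (k+1), ((2*k).factorial : ℝ) *
          ((P ^ l / (l.factorial:ℝ)) * (P ^ (2*k-2*l) / ((2*k-2*l).factorial:ℝ))) := by
        rw [hTsum]
        simp only [Finset.mul_sum]
        exact Finset.sum_congr rfl fun l _ => by ring
    _ ≤ 2 ^ (12*k) * ∑ l ∈ Finset.range (k+1),
          (4 ^ k * Real.exp k * (P ^ (2*k) + ((k:ℝ) * P) ^ k)) :=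
        mul_le_mul_of_nonneg_left (Finset.sum_le_sum hfinal) (by positivity)
    _ = (2:ℝ) ^ (12*k) * ((k:ℝ)+1) * 4 ^ k * Real.exp k * (P ^ (2*k) + ((k:ℝ) * P) ^ k) := by
        rw [Finset.sum_const, Finset.card_range, nsmul_eq_mul]
        push_cast
        ring
    _ ≤ Real.exp (30*k) * (P ^ (2*k) + ((k:ℝ) * P) ^ k) :=
        mul_le_mul_of_nonneg_right hnum hA0
end
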